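/- Let d and v be integers. If, in the Laurent polynomial ring ℚ[t, t⁻¹], the element d·(−2 − ((2d+1)/3)·(t + t⁻¹ − 2)) − 4v·(d·t + (1−2d) + d·t⁻¹) is zero, then d = 0 and v = 0. -/

import Mathlib

open LaurentPolynomial

/-- If the difference of reduced 2-loop polynomials vanishes in `ℚ[t,t⁻¹]`,
then `d = 0` and `v = 0`. -/
theorem d_eq_zero_and_v_eq_zero_of_laurent_eq_zero (d v : ℤ)
    (h : (C (d : ℚ) * (-2 - C ((2 * (d : ℚ) + 1) / 3) * (T 1 + T (-1) - 2))
        - C (4 * (v : ℚ)) * (C (d : ℚ) * T 1 + C (1 - 2 * (d : ℚ)) + C (d : ℚ) * T (-1))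
      : LaurentPolynomial ℚ) = 0) :
    d = 0 ∧ v = 0 := by
  set a : ℚ := -((d : ℚ) * ((2 * (d : ℚ) + 1) / 3)) - 4 * (v : ℚ) * (d : ℚ) with ha
  set b : ℚ := -2 * (d : ℚ) + 2 * ((d : ℚ) * ((2 * (d : ℚ) + 1) / 3))
      - 4 * (v : ℚ) * (1 - 2 * (d : ℚ)) with hb
  have key : (C (d : ℚ) * (-2 - C ((2 * (d : ℚ) + 1) / 3) * (T 1 + T (-1) - 2))
        - C (4 * (v : ℚ)) * (C (d : ℚ) * T 1 + C (1 - 2 * (d : ℚ)) + C (d : ℚ) * T (-1))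
      : LaurentPolynomial ℚ)
      = AddMonoidAlgebra.single 1 a + AddMonoidAlgebra.single 0 b + AddMonoidAlgebra.single (-1) a := by
    simp only [single_eq_C_mul_T, ha, hb, map_sub, map_add, map_mul, map_neg, map_ofNat,
      map_one, T_zero]
    ring
  rw [key] at h
  have hF : (Finsupp.single 1 a + Finsupp.single 0 b + Finsupp.single (-1) a : ℤ →₀ ℚ) = 0 := congrArg AddMonoidAlgebra.coeff h
  have h1 : a = 0 := by
    have := Finsupp.ext_iff.mp hF 1
    norm_num [Finsupp.add_apply, Finsupp.single_apply, -single_eq_C_mul_T] at this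
    exact this
  have h0 : b = 0 := by
    have := Finsupp.ext_iff.mp hF 0
    norm_num [Finsupp.add_apply, Finsupp.single_apply, -single_eq_C_mul_T] at this
    exact this
  have h1' : (d : ℚ) * (2 * (d : ℚ) + 1 + 12 * (v : ℚ)) = 0 := by
    rw [ha] at h1
    linarith
  have h1'' : d * (2 * d + 1 + 12 * v) = 0 := by exact_mod_cast h1'
  rcases mul_eq_zero.mp h1'' with hd | hd
  · refine ⟨hd, ?_⟩
    have : (d : ℚ) = 0 := by exact_mod_cast hd
    rw [hb, this] at h0
    have : (v : ℚ) = 0 := by linarith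
    exact_mod_cast this
  · omega
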